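/- Let G be a countable monoid acting on a set X. Then the following conditions are equivalent: (1) X admits a non-discrete Hausdorff G-topology; (2) the Zariski G-topology ζ_G on X is not discrete (some subset of X is not ζ_G-open); (3) the set of non-discrete normal G-topologies on X has cardinality at least 2^(2^ℵ₀). -/

import Mathlib

open Topology Cardinal Set

universe u

def zariskiGTopology (G X : Type*) [Monoid G] [MulAction G X] : TopologicalSpace X :=
  TopologicalSpace.generateFrom
    ({S : Set X | ∃ f g : G, S = {x : X | f • x ≠ g • x}} ∪
     {S : Set X | ∃ (f : G) (c : X), S = {x : X | f • x ≠ c}})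

section Basic
variable {G : Type*} {X : Type u} [Monoid G] [MulAction G X]

lemma zar_isOpen_ne (f g : G) : IsOpen[zariskiGTopology G X] {x : X | f • x ≠ g • x} :=
  TopologicalSpace.isOpen_generateFrom_of_mem (Or.inl ⟨f, g, rfl⟩)

lemma zar_isOpen_neConst (f : G) (c : X) : IsOpen[zariskiGTopology G X] {x : X | f • x ≠ c} :=
  TopologicalSpace.isOpen_generateFrom_of_mem (Or.inr ⟨f, c, rfl⟩)

/-- Any Hausdorff G-topology is finer than the Zariski one. -/
lemma zar_le_of_t2 (τ : TopologicalSpace X) (hT2 : @T2Space X τ)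
    (hc : ∀ g : G, Continuous[τ, τ] fun x => g • x) :
    ∀ U : Set X, IsOpen[zariskiGTopology G X] U → IsOpen[τ] U := by
  letI := τ
  intro U hU
  refine hU.mono (le_generateFrom ?_)
  rintro S (⟨f, g, rfl⟩ | ⟨f, c, rfl⟩)
  · have : {x : X | f • x ≠ g • x} =
        (fun x : X => (f • x, g • x)) ⁻¹' (Set.diagonal X)ᶜ := by
      ext x; simp [Set.diagonal]
    rw [this]
    exact (isClosed_diagonal.isOpen_compl).preimage ((hc f).prodMk (hc g))
  · have : {x : X | f • x ≠ c} = (fun x : X => f • x) ⁻¹' {y | y ≠ c} := rfl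
    rw [this]
    exact isOpen_ne.preimage (hc f)

lemma exists_nonisolated (h : ∃ U : Set X, ¬ IsOpen[zariskiGTopology G X] U) :
    ∃ z : X, ¬ IsOpen[zariskiGTopology G X] {z} := by
  letI := zariskiGTopology G X
  by_contra hz
  push_neg at hz
  obtain ⟨U, hU⟩ := h
  exact hU (by
    have : U = ⋃ x ∈ U, {x} := by simp
    rw [this]
    exact isOpen_biUnion fun x _ => hz x)

lemma exists_ne_of_mem_open {z : X} (hz : ¬ IsOpen[zariskiGTopology G X] {z})
    {U : Set X} (hU : IsOpen[zariskiGTopology G X] U) (hzU : z ∈ U) :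
    ∃ y ∈ U, y ≠ z := by
  by_contra h
  push_neg at h
  have : U = {z} := Set.eq_singleton_iff_unique_mem.2 ⟨hzU, h⟩
  exact hz (this ▸ hU)

end Basic

section Seq
variable {G : Type*} {X : Type u} [Monoid G] [MulAction G X]

open scoped Classical in
lemma exists_good_seq (e : ℕ → G) (z : X) (hz : ¬ IsOpen[zariskiGTopology G X] {z}) :
    ∃ x : ℕ → X,
      (∀ n, x n ≠ z) ∧
      (∀ m n, m < n → x n ≠ x m) ∧
      (∀ n i j, i ≤ n → j ≤ n → e i • z ≠ e j • z →
        e i • x n ≠ e j • x n ∧ e i • x n ≠ e j • z) ∧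
      (∀ m n i j, m < n → i ≤ n → j ≤ m → e i • z ≠ e j • x m → e i • x n ≠ e j • x m) := by
  letI := zariskiGTopology G X
  set P : ℕ × X → Prop := fun a =>
    a.2 ≠ z ∧ ∀ i j, i ≤ a.1 → j ≤ a.1 → e i • z ≠ e j • z →
      e i • a.2 ≠ e j • a.2 ∧ e i • a.2 ≠ e j • z with hP
  set r : ℕ × X → ℕ × X → Prop := fun a b =>
    a.1 < b.1 ∧ b.2 ≠ a.2 ∧
      ∀ i j, i ≤ b.1 → j ≤ a.1 → e i • z ≠ e j • a.2 → e i • b.2 ≠ e j • a.2 with hr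
  have main : ∀ s : Finset (ℕ × X), (∀ a ∈ s, P a) → ∃ y, P y ∧ ∀ a ∈ s, r a y := by
    intro s hs
    set N : ℕ := (s.sup fun a => a.1) + 1 with hN
    have hsN : ∀ a ∈ s, a.1 < N := fun a ha =>
      Nat.lt_succ_of_le (Finset.le_sup (f := fun a : ℕ × X => a.1) ha)
    set V1 : Set X := ⋂ i ∈ Finset.range (N+1), ⋂ j ∈ Finset.range (N+1),
      (if e i • z ≠ e j • z then ({x | e i • x ≠ e j • x} ∩ {x | e i • x ≠ e j • z})
       else Set.univ) with hV1
    set V2 : Set X := ⋂ a ∈ s, ({x : X | (1:G) • x ≠ a.2} ∩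
      ⋂ i ∈ Finset.range (N+1), ⋂ j ∈ Finset.range (a.1+1),
        (if e i • z ≠ e j • a.2 then {x | e i • x ≠ e j • a.2} else Set.univ)) with hV2
    have hV1open : IsOpen V1 := by
      refine isOpen_biInter_finset fun i _ => isOpen_biInter_finset fun j _ => ?_
      split_ifs
      · exact (zar_isOpen_ne _ _).inter (zar_isOpen_neConst _ _)
      · exact isOpen_univ
    have hV2open : IsOpen V2 := by
      refine isOpen_biInter_finset fun a _ => IsOpen.inter (zar_isOpen_neConst _ _) ?_
      refine isOpen_biInter_finset fun i _ => isOpen_biInter_finset fun j _ => ?_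
      split_ifs
      · exact zar_isOpen_neConst _ _
      · exact isOpen_univ
    have hzV : z ∈ V1 ∩ V2 := by
      constructor
      · refine Set.mem_iInter₂.2 fun i _ => Set.mem_iInter₂.2 fun j _ => ?_
        split_ifs with h
        · exact ⟨h, h⟩
        · trivial
      · refine Set.mem_iInter₂.2 fun a ha => ⟨?_, ?_⟩
        · simpa using fun h => (hs a ha).1 h.symm
        · refine Set.mem_iInter₂.2 fun i _ => Set.mem_iInter₂.2 fun j _ => ?_
          split_ifs with h
          · exact h
          · trivial
    obtain ⟨y, hyV, hyz⟩ := exists_ne_of_mem_open hz (hV1open.inter hV2open) hzV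
    refine ⟨(N, y), ⟨hyz, ?_⟩, ?_⟩
    · intro i j hi hj hne
      have h2 := Set.mem_iInter₂.1
        (Set.mem_iInter₂.1 hyV.1 i (Finset.mem_range.2 (by omega))) j
        (Finset.mem_range.2 (by omega))
      rw [if_pos hne] at h2
      exact ⟨h2.1, h2.2⟩
    · intro a ha
      obtain ⟨hy1, hy2⟩ := Set.mem_iInter₂.1 hyV.2 a ha
      refine ⟨hsN a ha, by simpa using hy1, ?_⟩
      intro i j hi hj hne
      have h3 := Set.mem_iInter₂.1
        (Set.mem_iInter₂.1 hy2 i (Finset.mem_range.2 (by omega))) j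
        (Finset.mem_range.2 (by omega))
      rw [if_pos hne] at h3
      exact h3
  obtain ⟨f, hfP, hfr⟩ := exists_seq_of_forall_finset_exists P r main
  have hmono : StrictMono fun n => (f n).1 := fun m n h => (hfr m n h).1
  have hle : ∀ n, n ≤ (f n).1 := fun n => hmono.le_apply
  refine ⟨fun n => (f n).2, fun n => (hfP n).1, fun m n h => (hfr m n h).2.1, ?_, ?_⟩
  · intro n i j hi hj hne
    exact (hfP n).2 i j (hi.trans (hle n)) (hj.trans (hle n)) hne
  · intro m n i j hmn hi hj hne
    exact (hfr m n hmn).2.2 i j (hi.trans (hle n)) (hj.trans (hle m)) hne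

end Seq

section Construction
variable {G : Type*} {X : Type u} [Monoid G] [MulAction G X]

/-- The topology determined by a filter `p` and a sequence `x` converging to `z`. -/
def actTop (G : Type*) {X : Type u} [Monoid G] [MulAction G X] (z : X) (x : ℕ → X) (p : Filter ℕ) : TopologicalSpace X where
  IsOpen U := ∀ g : G, g • z ∈ U → {n | g • x n ∈ U} ∈ p
  isOpen_univ := fun g _ => by simpa using Filter.univ_mem
  isOpen_inter := fun U V hU hV g hg => by
    have h := Filter.inter_mem (hU g hg.1) (hV g hg.2)
    exact Filter.mem_of_superset h fun n hn => ⟨hn.1, hn.2⟩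
  isOpen_sUnion := fun S hS g hg => by
    obtain ⟨U, hU, hgU⟩ := hg
    exact Filter.mem_of_superset (hS U hU g hgU) fun n hn => ⟨U, hU, hn⟩

lemma actTop_isOpen_iff {z : X} {x : ℕ → X} {p : Filter ℕ} {U : Set X} :
    IsOpen[actTop G z x p] U ↔ ∀ g : G, g • z ∈ U → {n | g • x n ∈ U} ∈ p := Iff.rfl

/-- Iterated saturation used both for normality and for distinguishing topologies. -/
def chain (z : X) (x : ℕ → X) (e : ℕ → G) (S : Set ℕ) (Av : Set X) (A : Set X) :
    ℕ → Set X
  | 0 => A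
  | k+1 => chain z x e S Av A k ∪
      {y | ∃ i n, i ≤ n ∧ n ∈ S ∧ e i • z ∈ chain z x e S Av A k ∧
        e i • x n ∉ Av ∧ y = e i • x n}

variable {z : X} {x : ℕ → X} {e : ℕ → G} {p : Filter ℕ}

lemma chain_isOpen (he : Function.Surjective e) (hp : p ≤ Filter.cofinite)
    {S : Set ℕ} {Av A : Set X} (hS : S ∈ p)
    (hAv : ∀ g : G, g • z ∈ (⋃ k, chain z x e S Av A k) → {n | g • x n ∉ Av} ∈ p) :
    IsOpen[actTop G z x p] (⋃ k, chain z x e S Av A k) := by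
  intro g hg
  obtain ⟨k, hk⟩ := Set.mem_iUnion.1 hg
  obtain ⟨i, rfl⟩ := he g
  have h1 : {n | i ≤ n} ∈ p := hp (by
    rw [Filter.mem_cofinite]
    convert Set.finite_Iio i using 1
    ext n; simp)
  have h2 := Filter.inter_mem (Filter.inter_mem hS h1) (hAv _ hg)
  refine Filter.mem_of_superset h2 fun n hn => ?_
  exact Set.mem_iUnion.2 ⟨k+1, Or.inr ⟨i, n, hn.1.2, hn.1.1, hk, hn.2, rfl⟩⟩

lemma finite_bad
    (hx3 : ∀ m n i j, m < n → i ≤ n → j ≤ m → e i • z ≠ e j • x m → e i • x n ≠ e j • x m)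
    (i : ℕ) (c : X) (hc : e i • z ≠ c) : {n | e i • x n = c}.Finite := by
  by_contra h
  replace h : Set.Infinite {n | e i • x n = c} := h
  obtain ⟨n1, hn1, hin1⟩ := h.exists_gt i
  obtain ⟨n2, hn2, h12⟩ := h.exists_gt n1
  have hne : e i • z ≠ e i • x n1 := by rw [hn1]; exact hc
  exact hx3 n1 n2 i i h12 (by omega) (le_of_lt hin1) hne (by rw [hn1, hn2])

end Construction

section Props
variable {G : Type*} {X : Type u} [Monoid G] [MulAction G X]
variable {z : X} {x : ℕ → X} {e : ℕ → G} {p : Filter ℕ}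

lemma actTop_not_discrete [p.NeBot] (hx0 : ∀ n, x n ≠ z) :
    ¬ IsOpen[actTop G z x p] {z} := by
  intro h
  have h1 := h 1 (by simp)
  have h2 : {n | (1:G) • x n ∈ ({z} : Set X)} = ∅ := by
    ext n; simp [hx0 n]
  rw [h2] at h1
  exact Filter.empty_notMem p h1

lemma actTop_continuous (g : G) :
    Continuous[actTop G z x p, actTop G z x p] fun a => g • a := by
  rw [continuous_def]
  intro U hU h hh
  have hgh : (g * h) • z ∈ U := by
    rw [mul_smul]; exact hh
  refine Filter.mem_of_superset (hU (g * h) hgh) fun n hn => ?_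
  simp only [Set.mem_setOf_eq, Set.mem_preimage] at *
  rwa [mul_smul] at hn
  
lemma actTop_t1 (he : Function.Surjective e) (hp : p ≤ Filter.cofinite)
    (hx3 : ∀ m n i j, m < n → i ≤ n → j ≤ m → e i • z ≠ e j • x m → e i • x n ≠ e j • x m)
    (y : X) : IsClosed[actTop G z x p] {y} := by
  refine @IsClosed.mk X (actTop G z x p) {y} ?_
  intro g hg
  rw [Set.mem_compl_iff, Set.mem_singleton_iff] at hg
  obtain ⟨i, rfl⟩ := he g
  have hfin : {n | e i • x n = y}.Finite := finite_bad hx3 i y hg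
  refine hp ?_
  rw [Filter.mem_cofinite]
  convert hfin using 1
  ext n; simp


variable (hx0 : ∀ n, x n ≠ z)
  (hx2 : ∀ n i j, i ≤ n → j ≤ n → e i • z ≠ e j • z →
    e i • x n ≠ e j • x n ∧ e i • x n ≠ e j • z)
  (hx3 : ∀ m n i j, m < n → i ≤ n → j ≤ m → e i • z ≠ e j • x m → e i • x n ≠ e j • x m)

lemma chain_avoid {S : Set ℕ} {Av A : Set X} :
    ∀ k y, y ∈ chain z x e S Av A k → y ∈ A ∨ y ∉ Av := by
  intro k
  induction k with
  | zero => exact fun y hy => Or.inl hy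
  | succ k ih =>
    rintro y (hy | ⟨i, n, _, _, _, hav, rfl⟩)
    exacts [ih y hy, Or.inr hav]

include hx2 hx3 in
lemma chain_disjoint {A B : Set X} (hAB : Disjoint A B) :
    ∀ s k j y, k + j ≤ s → y ∈ chain z x e Set.univ B A k →
      y ∈ chain z x e Set.univ A B j → False := by
  have hbase : ∀ j y, y ∈ A → y ∈ chain z x e Set.univ A B j → False := by
    intro j y hyA hyV
    rcases chain_avoid j y hyV with hB | hA
    · exact Set.disjoint_left.1 hAB hyA hB
    · exact hA hyA
  have hbase' : ∀ k y, y ∈ B → y ∈ chain z x e Set.univ B A k → False := by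
    intro k y hyB hyU
    rcases chain_avoid k y hyU with hA | hB
    · exact Set.disjoint_left.1 hAB hA hyB
    · exact hB hyB
  intro s
  induction s with
  | zero =>
    intro k j y hkj hyU hyV
    obtain ⟨rfl, rfl⟩ : k = 0 ∧ j = 0 := by omega
    exact Set.disjoint_left.1 hAB hyU hyV
  | succ s ih =>
    intro k j y hkj hyU hyV
    match k, j with
    | 0, j => exact hbase j y hyU hyV
    | k+1, 0 => exact hbase' (k+1) y hyV hyU
    | k+1, j+1 =>
      rcases hyU with hyU' | ⟨i, n, hin, -, hiz, hnB, rfl⟩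
      · exact ih k (j+1) y (by omega) hyU' hyV
      rcases hyV with hyV' | ⟨i', m, him, -, hiz', hmA, heq⟩
      · exact ih (k+1) j _ (by omega)
          (Or.inr ⟨i, n, hin, trivial, hiz, hnB, rfl⟩) hyV'
      rcases lt_trichotomy n m with h | h | h
      · -- n < m
        have hguard : e i' • z ≠ e i • x n := by
          intro hEq
          exact ih (k+1) j (e i • x n) (by omega)
            (Or.inr ⟨i, n, hin, trivial, hiz, hnB, rfl⟩) (hEq ▸ hiz')
        exact hx3 n m i' i h him hin hguard heq.symm
      · -- n = m
        subst h
        have hguard : e i • z ≠ e i' • z := by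
          intro hEq
          exact ih k j (e i • z) (by omega) hiz (hEq ▸ hiz')
        exact (hx2 n i i' hin him hguard).1 heq
      · -- m < n
        have hguard : e i • z ≠ e i' • x m := by
          intro hEq
          exact ih k (j+1) (e i' • x m) (by omega) (hEq ▸ hiz)
            (Or.inr ⟨i', m, him, trivial, hiz', hmA, rfl⟩)
        exact hx3 m n i i' h hin him hguard heq

include hx2 hx3 in
lemma actTop_normal (he : Function.Surjective e) (hp : p ≤ Filter.cofinite)
    {A B : Set X} (hA : IsClosed[actTop G z x p] A) (hB : IsClosed[actTop G z x p] B)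
    (hAB : Disjoint A B) :
    ∃ U V : Set X, IsOpen[actTop G z x p] U ∧ IsOpen[actTop G z x p] V ∧
      A ⊆ U ∧ B ⊆ V ∧ Disjoint U V := by
  set U := ⋃ k, chain z x e Set.univ B A k with hU
  set V := ⋃ k, chain z x e Set.univ A B k with hV
  have hUV : Disjoint U V := by
    rw [Set.disjoint_left]
    rintro y hyU hyV
    obtain ⟨k, hk⟩ := Set.mem_iUnion.1 hyU
    obtain ⟨j, hj⟩ := Set.mem_iUnion.1 hyV
    exact chain_disjoint hx2 hx3 hAB (k+j) k j y le_rfl hk hj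
  have hUB : ∀ w, w ∈ U → w ∉ B := by
    intro w hw hwB
    exact Set.disjoint_left.1 hUV hw (Set.mem_iUnion.2 ⟨0, hwB⟩)
  have hVA : ∀ w, w ∈ V → w ∉ A := by
    intro w hw hwA
    exact Set.disjoint_left.1 hUV (Set.mem_iUnion.2 ⟨0, hwA⟩) hw
  refine ⟨U, V, ?_, ?_, ?_, ?_, hUV⟩
  · exact chain_isOpen he hp Filter.univ_mem
      (fun g hg => hB.isOpen_compl g (hUB _ hg))
  · exact chain_isOpen he hp Filter.univ_mem
      (fun g hg => hA.isOpen_compl g (hVA _ hg))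
  · exact Set.subset_iUnion (chain z x e Set.univ B A) 0
  · exact Set.subset_iUnion (chain z x e Set.univ A B) 0

include hx0 hx3 in
lemma chain_mem_S (i1 : ℕ) (hi1 : e i1 = 1) {S : Set ℕ} :
    ∀ k y, y ∈ chain z x e S ∅ {z} k → ∀ n, i1 ≤ n → y = x n → n ∈ S := by
  intro k
  induction k with
  | zero =>
    intro y hy n _ hyn
    exact absurd (hyn.symm.trans hy) (hx0 n)
  | succ k ih =>
    rintro y (hy | ⟨i, m, him, hmS, hiz, -, rfl⟩) n hi1n hyn
    · exact ih y hy n hi1n hyn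
    rcases lt_trichotomy n m with h | h | h
    · -- n < m
      by_cases hcase : e i • z = x n
      · exact ih (x n) (hcase ▸ hiz) n hi1n rfl
      · have hcon := hx3 n m i i1 h him hi1n
          (by rw [hi1, one_smul]; exact hcase)
        rw [hi1, one_smul] at hcon
        exact absurd hyn hcon
    · subst h
      exact hmS
    · -- m < n
      have hguard : e i1 • z ≠ e i • x m := by
        rw [hi1, one_smul]
        intro hEq
        exact hx0 n (by rw [← hyn, ← hEq])
      have hcon := hx3 m n i1 i h hi1n him hguard
      rw [hi1, one_smul] at hcon
      exact absurd hyn.symm hcon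

include hx0 hx3 in
lemma actTop_distinguish (he : Function.Surjective e) (hp : p ≤ Filter.cofinite)
    {q : Filter ℕ} (hq : q ≤ Filter.cofinite)
    {S : Set ℕ} (hSp : S ∈ p) (hSq : S ∉ q) :
    actTop G z x p ≠ actTop G z x q := by
  obtain ⟨i1, hi1⟩ := he 1
  set W := ⋃ k, chain z x e S ∅ ({z} : Set X) k with hW
  have hWp : IsOpen[actTop G z x p] W :=
    chain_isOpen he hp hSp (fun g _ => by
      simpa using Filter.univ_mem)
  have hWq : ¬ IsOpen[actTop G z x q] W := by
    intro hopen
    have hzW : (1:G) • z ∈ W := Set.mem_iUnion.2 ⟨0, show (1:G) • z ∈ ({z} : Set X) by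
      rw [one_smul]; exact rfl⟩
    have hT := hopen 1 hzW
    have hsub : {n | (1:G) • x n ∈ W} ⊆ S ∪ Set.Iio i1 := by
      intro n hn
      by_cases hcase : i1 ≤ n
      · obtain ⟨k, hk⟩ := Set.mem_iUnion.1 hn
        exact Or.inl (chain_mem_S hx0 hx3 i1 hi1 k _ hk n hcase (one_smul _ _))
      · exact Or.inr (by simpa using Nat.lt_of_not_le hcase)
    have h1 : S ∪ Set.Iio i1 ∈ q := Filter.mem_of_superset hT hsub
    have h2 : Set.Ici i1 ∈ q := hq (by
      rw [Filter.mem_cofinite]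
      convert Set.finite_Iio i1 using 1
      ext n; simp)
    have h3 : S ∈ q := Filter.mem_of_superset (Filter.inter_mem h1 h2) (by
      rintro n ⟨h4 | h4, h5⟩
      · exact h4
      · exact absurd h5 (by simpa using h4))
    exact hSq h3
  intro hEq
  rw [hEq] at hWp
  exact hWq hWp

end Props

section Filters

/-- The countable ground set for the independent family of filters. -/
abbrev OmegaSet : Type := Finset ℕ × Finset (Finset ℕ)

instance : Infinite OmegaSet :=
  Infinite.of_injective (fun n : ℕ => (({n} : Finset ℕ), (∅ : Finset (Finset ℕ))))
    (fun a b h => by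
      have h2 := congrArg Prod.fst h
      simpa using h2)

noncomputable instance : Denumerable OmegaSet :=
  Denumerable.ofEncodableOfInfinite OmegaSet

open Classical in
/-- The basic independent sets. -/
noncomputable def ISet (A : Set ℕ) : Set OmegaSet :=
  {w | w.1.filter (· ∈ A) ∈ w.2}

open Classical in
/-- The filter generated by the cofinite filter together with `ISet A`, `A ∈ 𝒜`. -/
def famFilter (𝒜 : Set (Set ℕ)) : Filter OmegaSet where
  sets := {T | ∃ F : Finset (Set ℕ), ↑F ⊆ 𝒜 ∧ ∃ C : Set OmegaSet, Cᶜ.Finite ∧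
    C ∩ ⋂ A ∈ F, ISet A ⊆ T}
  univ_sets := ⟨∅, by simp, Set.univ, by simp, Set.subset_univ _⟩
  sets_of_superset := by
    rintro T T' ⟨F, hF, C, hC, hsub⟩ hTT'
    exact ⟨F, hF, C, hC, hsub.trans hTT'⟩
  inter_sets := by
    rintro T T' ⟨F, hF, C, hC, hsub⟩ ⟨F', hF', C', hC', hsub'⟩
    refine ⟨F ∪ F', ?_, C ∩ C', ?_, ?_⟩
    · rw [Finset.coe_union]
      exact Set.union_subset hF hF'
    · rw [Set.compl_inter]
      exact hC.union hC'
    · intro w hw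
      have hw1 : w ∈ ⋂ A ∈ F, ISet A := by
        refine Set.mem_iInter₂.2 fun A hA => ?_
        exact Set.mem_iInter₂.1 hw.2 A (Finset.mem_union_left _ hA)
      have hw2 : w ∈ ⋂ A ∈ F', ISet A := by
        refine Set.mem_iInter₂.2 fun A hA => ?_
        exact Set.mem_iInter₂.1 hw.2 A (Finset.mem_union_right _ hA)
      exact ⟨hsub ⟨hw.1.1, hw1⟩, hsub' ⟨hw.1.2, hw2⟩⟩

open Classical in
lemma famFilter_witness (F : Finset (Set ℕ)) (s : Finset ℕ) :
    (s, F.image (fun A => s.filter (· ∈ A))) ∈ ⋂ A ∈ F, ISet A := by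
  refine Set.mem_iInter₂.2 fun A hA => ?_
  exact Finset.mem_image_of_mem (fun A => s.filter (· ∈ A)) hA

open Classical in
lemma famFilter_inter_infinite (F : Finset (Set ℕ)) :
    {w : OmegaSet | w ∈ ⋂ A ∈ F, ISet A}.Infinite := by
  have hinj : Function.Injective
      (fun s : Finset ℕ => ((s, F.image (fun A => s.filter (· ∈ A))) : OmegaSet)) :=
    fun a b h => congrArg Prod.fst h
  refine Set.Infinite.mono ?_ (Set.infinite_range_of_injective hinj)
  rintro w ⟨s, rfl⟩
  exact famFilter_witness F s

instance famFilter_neBot (𝒜 : Set (Set ℕ)) : (famFilter 𝒜).NeBot := by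
  rw [← Filter.forall_mem_nonempty_iff_neBot]
  rintro T ⟨F, hF, C, hC, hsub⟩
  have h1 : ({w : OmegaSet | w ∈ ⋂ A ∈ F, ISet A} \ Cᶜ).Infinite :=
    (famFilter_inter_infinite F).diff hC
  obtain ⟨w, hw1, hw2⟩ := h1.nonempty
  exact ⟨w, hsub ⟨Set.not_notMem.1 hw2, hw1⟩⟩

lemma famFilter_le_cofinite (𝒜 : Set (Set ℕ)) : famFilter 𝒜 ≤ Filter.cofinite := by
  intro T hT
  rw [Filter.mem_cofinite] at hT
  exact ⟨∅, by simp, T, hT, by simp⟩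

lemma ISet_mem {𝒜 : Set (Set ℕ)} {A : Set ℕ} (hA : A ∈ 𝒜) : ISet A ∈ famFilter 𝒜 :=
  ⟨{A}, by simpa using hA, Set.univ, by simp, by simp⟩

open Classical in
lemma ISet_not_mem {𝒜 : Set (Set ℕ)} {B : Set ℕ} (hB : B ∉ 𝒜) : ISet B ∉ famFilter 𝒜 := by
  rintro ⟨F, hF, C, hC, hsub⟩
  have hsep : ∀ A ∈ F, ∃ n : ℕ, ¬ (n ∈ A ↔ n ∈ B) := by
    intro A hA
    by_contra h
    push_neg at h
    have hABeq : A = B := Set.ext fun n => h n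
    exact hB (hABeq ▸ hF hA)
  choose ν hν using hsep
  set s₀ : Finset ℕ := F.attach.image (fun a => ν a.1 a.2) with hs₀
  set M : ℕ := s₀.sup id + 1 with hM
  have hMout : ∀ n : ℕ, M + n ∉ s₀ := by
    intro n hn
    have h2 := Finset.le_sup (f := id) hn
    simp only [id_eq] at h2
    omega
  set w : ℕ → OmegaSet := fun n =>
    ((s₀ ∪ {M + n}), F.image (fun A => (s₀ ∪ {M + n}).filter (· ∈ A))) with hw
  have hwinj : Function.Injective w := by
    intro a b h
    have h1 := congrArg Prod.fst h
    simp only [hw] at h1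
    have : M + a ∈ s₀ ∪ ({M + b} : Finset ℕ) := by
      rw [← h1]; simp
    rcases Finset.mem_union.1 this with h2 | h2
    · exact absurd h2 (hMout a)
    · have : M + a = M + b := Finset.mem_singleton.1 h2
      omega
  have hwmem : ∀ n, w n ∈ (⋂ A ∈ F, ISet A) \ ISet B := by
    intro n
    refine ⟨famFilter_witness F _, ?_⟩
    intro hmem
    rw [ISet, Set.mem_setOf_eq] at hmem
    obtain ⟨A, hA, hAeq⟩ := Finset.mem_image.1 hmem
    have h849 := Finset.ext_iff.1 hAeq (ν A hA)
    have hν₀ : ν A hA ∈ s₀ ∪ ({M + n} : Finset ℕ) :=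
      Finset.mem_union_left _ (Finset.mem_image.2 ⟨⟨A, hA⟩, Finset.mem_attach _ _, rfl⟩)
    simp only [hw, Finset.mem_filter, hν₀, true_and] at h849
    exact hν A hA h849
  have hinf : ((⋂ A ∈ F, ISet A) \ ISet B).Infinite :=
    Set.Infinite.mono (fun y hy => by
      obtain ⟨n, rfl⟩ := hy
      exact hwmem n) (Set.infinite_range_of_injective hwinj)
  obtain ⟨v, hv1, hv2⟩ := (hinf.diff hC).nonempty
  exact hv1.2 (hsub ⟨Set.not_notMem.1 hv2, hv1.1⟩)

lemma famFilter_injective : Function.Injective famFilter := by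
  intro 𝒜 ℬ h
  by_contra hne
  have : ∃ A, (A ∈ 𝒜 ∧ A ∉ ℬ) ∨ (A ∈ ℬ ∧ A ∉ 𝒜) := by
    by_contra hc
    push_neg at hc
    exact hne (Set.ext fun A => ⟨fun h1 => (hc A).1 h1, fun h1 => (hc A).2 h1⟩)
  obtain ⟨A, ⟨h1, h2⟩ | ⟨h1, h2⟩⟩ := this
  · exact ISet_not_mem h2 (h ▸ ISet_mem h1)
  · exact ISet_not_mem h2 (h ▸ ISet_mem h1)

end Filters

section Transport

noncomputable def natFam (𝒜 : Set (Set ℕ)) : Filter ℕ :=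
  Filter.map (Denumerable.eqv OmegaSet) (famFilter 𝒜)

instance natFam_neBot (𝒜 : Set (Set ℕ)) : (natFam 𝒜).NeBot :=
  (famFilter_neBot 𝒜).map _

lemma natFam_le_cofinite (𝒜 : Set (Set ℕ)) : natFam 𝒜 ≤ Filter.cofinite := by
  intro T hT
  rw [Filter.mem_cofinite] at hT
  rw [natFam, Filter.mem_map]
  apply famFilter_le_cofinite
  rw [Filter.mem_cofinite]
  have h2 : ((Denumerable.eqv OmegaSet) ⁻¹' T)ᶜ = (Denumerable.eqv OmegaSet) ⁻¹' Tᶜ := by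
    rw [Set.preimage_compl]
  rw [h2]
  exact hT.preimage (Equiv.injective _).injOn

lemma natFam_injective : Function.Injective natFam :=
  fun _ _ h => famFilter_injective (Filter.map_injective (Equiv.injective _) h)

end Transport

/-- Let `G` be a countable monoid acting on a set `X`.  The following are equivalent:
(1) `X` admits a non-discrete Hausdorff `G`-topology;
(2) the Zariski `G`-topology on `X` is not discrete;
(3) the set of non-discrete normal `G`-topologies on `X` has cardinality at least
`2^(2^ℵ₀)`. -/
theorem GTopologizable_iff_zariski_not_discrete {G : Type*} {X : Type u}
    [Monoid G] [MulAction G X] [Countable G] :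
    ((∃ τ : TopologicalSpace X, @T2Space X τ ∧
        (∀ g : G, Continuous[τ, τ] fun x => g • x) ∧
        ¬ ∀ U : Set X, IsOpen[τ] U) ↔
      (∃ U : Set X, ¬ IsOpen[zariskiGTopology G X] U)) ∧
    ((∃ U : Set X, ¬ IsOpen[zariskiGTopology G X] U) ↔
      (2 : Cardinal.{u}) ^ ((2 : Cardinal.{u}) ^ (ℵ₀ : Cardinal.{u})) ≤
        #{τ : TopologicalSpace X |
          (¬ ∀ U : Set X, IsOpen[τ] U) ∧
          (∀ g : G, Continuous[τ, τ] fun x => g • x) ∧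
          (∀ y : X, IsClosed[τ] {y}) ∧
          (∀ A B : Set X, IsClosed[τ] A → IsClosed[τ] B → Disjoint A B →
            ∃ U V : Set X, IsOpen[τ] U ∧ IsOpen[τ] V ∧ A ⊆ U ∧ B ⊆ V ∧ Disjoint U V)}) := by
  have hAB : (∃ τ : TopologicalSpace X, @T2Space X τ ∧
      (∀ g : G, Continuous[τ, τ] fun x => g • x) ∧ ¬ ∀ U : Set X, IsOpen[τ] U) →
      (∃ U : Set X, ¬ IsOpen[zariskiGTopology G X] U) := by
    rintro ⟨τ, hT2, hcont, hnd⟩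
    rw [not_forall] at hnd
    obtain ⟨U, hU⟩ := hnd
    exact ⟨U, fun h => hU (zar_le_of_t2 τ hT2 hcont U h)⟩
  have hBC : (∃ U : Set X, ¬ IsOpen[zariskiGTopology G X] U) →
      (2 : Cardinal.{u}) ^ ((2 : Cardinal.{u}) ^ (ℵ₀ : Cardinal.{u})) ≤
        #{τ : TopologicalSpace X |
          (¬ ∀ U : Set X, IsOpen[τ] U) ∧
          (∀ g : G, Continuous[τ, τ] fun x => g • x) ∧
          (∀ y : X, IsClosed[τ] {y}) ∧
          (∀ A B : Set X, IsClosed[τ] A → IsClosed[τ] B → Disjoint A B →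
            ∃ U V : Set X, IsOpen[τ] U ∧ IsOpen[τ] V ∧ A ⊆ U ∧ B ⊆ V ∧ Disjoint U V)} := by
    intro hB
    obtain ⟨z, hz⟩ := exists_nonisolated hB
    obtain ⟨e, he⟩ := exists_surjective_nat G
    obtain ⟨x, hx0, _hx1, hx2, hx3⟩ := exists_good_seq e z hz
    have hmem : ∀ 𝒜 : Set (Set ℕ), actTop G z x (natFam 𝒜) ∈
        {τ : TopologicalSpace X |
          (¬ ∀ U : Set X, IsOpen[τ] U) ∧
          (∀ g : G, Continuous[τ, τ] fun x => g • x) ∧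
          (∀ y : X, IsClosed[τ] {y}) ∧
          (∀ A B : Set X, IsClosed[τ] A → IsClosed[τ] B → Disjoint A B →
            ∃ U V : Set X, IsOpen[τ] U ∧ IsOpen[τ] V ∧ A ⊆ U ∧ B ⊆ V ∧ Disjoint U V)} := by
      intro 𝒜
      refine ⟨fun hall => actTop_not_discrete hx0 (hall {z}),
        fun g => actTop_continuous g,
        fun y => actTop_t1 he (natFam_le_cofinite 𝒜) hx3 y,
        fun A B hA hB' hAB' => actTop_normal hx2 hx3 he (natFam_le_cofinite 𝒜) hA hB' hAB'⟩
    set f : Set (Set ℕ) → {τ : TopologicalSpace X |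
          (¬ ∀ U : Set X, IsOpen[τ] U) ∧
          (∀ g : G, Continuous[τ, τ] fun x => g • x) ∧
          (∀ y : X, IsClosed[τ] {y}) ∧
          (∀ A B : Set X, IsClosed[τ] A → IsClosed[τ] B → Disjoint A B →
            ∃ U V : Set X, IsOpen[τ] U ∧ IsOpen[τ] V ∧ A ⊆ U ∧ B ⊆ V ∧ Disjoint U V)} :=
      fun 𝒜 => ⟨actTop G z x (natFam 𝒜), hmem 𝒜⟩ with hf
    have hfinj : Function.Injective f := by
      intro 𝒜 ℬ hfab
      by_contra hne
      have hne2 : natFam 𝒜 ≠ natFam ℬ := fun h => hne (natFam_injective h)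
      have hsep : ∃ S, ¬ (S ∈ natFam 𝒜 ↔ S ∈ natFam ℬ) := by
        by_contra hc
        push_neg at hc
        exact hne2 (Filter.ext fun S => hc S)
      obtain ⟨S, hS⟩ := hsep
      have hval : actTop G z x (natFam 𝒜) = actTop G z x (natFam ℬ) :=
        congrArg Subtype.val hfab
      rcases Classical.em (S ∈ natFam 𝒜) with h1 | h1
      · have h2 : S ∉ natFam ℬ := fun h => hS ⟨fun _ => h, fun _ => h1⟩
        exact actTop_distinguish hx0 hx3 he (natFam_le_cofinite 𝒜)
          (natFam_le_cofinite ℬ) h1 h2 hval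
      · have h2 : S ∈ natFam ℬ := by
          by_contra h2
          exact hS ⟨fun h => absurd h h1, fun h => absurd h h2⟩
        exact actTop_distinguish hx0 hx3 he (natFam_le_cofinite ℬ)
          (natFam_le_cofinite 𝒜) h2 h1 hval.symm
    have hcard := Cardinal.lift_mk_le'.mpr ⟨⟨f, hfinj⟩⟩
    rw [Cardinal.lift_uzero] at hcard
    have hms : #(Set (Set ℕ)) = (2 : Cardinal.{0}) ^ ((2 : Cardinal.{0}) ^ (ℵ₀ : Cardinal.{0})) := by
      rw [Cardinal.mk_set, Cardinal.mk_set, Cardinal.mk_nat]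
    rw [hms] at hcard
    simpa using hcard
  have hCA : ((2 : Cardinal.{u}) ^ ((2 : Cardinal.{u}) ^ (ℵ₀ : Cardinal.{u})) ≤
        #{τ : TopologicalSpace X |
          (¬ ∀ U : Set X, IsOpen[τ] U) ∧
          (∀ g : G, Continuous[τ, τ] fun x => g • x) ∧
          (∀ y : X, IsClosed[τ] {y}) ∧
          (∀ A B : Set X, IsClosed[τ] A → IsClosed[τ] B → Disjoint A B →
            ∃ U V : Set X, IsOpen[τ] U ∧ IsOpen[τ] V ∧ A ⊆ U ∧ B ⊆ V ∧ Disjoint U V)}) →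
      (∃ τ : TopologicalSpace X, @T2Space X τ ∧
        (∀ g : G, Continuous[τ, τ] fun x => g • x) ∧ ¬ ∀ U : Set X, IsOpen[τ] U) := by
    intro hC
    have hne : Nonempty {τ : TopologicalSpace X |
          (¬ ∀ U : Set X, IsOpen[τ] U) ∧
          (∀ g : G, Continuous[τ, τ] fun x => g • x) ∧
          (∀ y : X, IsClosed[τ] {y}) ∧
          (∀ A B : Set X, IsClosed[τ] A → IsClosed[τ] B → Disjoint A B →
            ∃ U V : Set X, IsOpen[τ] U ∧ IsOpen[τ] V ∧ A ⊆ U ∧ B ⊆ V ∧ Disjoint U V)} := by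
      rw [← Cardinal.mk_ne_zero_iff]
      intro h0
      rw [h0, le_zero_iff] at hC
      exact Cardinal.power_ne_zero _ two_ne_zero hC
    obtain ⟨⟨τ, hnd, hcont, ht1, hnorm⟩⟩ := hne
    refine ⟨τ, ?_, hcont, hnd⟩
    refine @T2Space.mk X τ ?_
    intro a b hab
    obtain ⟨U, V, hU, hV, haU, hbV, hUV⟩ := hnorm {a} {b} (ht1 a) (ht1 b)
      (Set.disjoint_singleton.2 hab)
    exact ⟨U, V, hU, hV, haU rfl, hbV rfl, hUV⟩
  exact ⟨⟨hAB, fun hB => hCA (hBC hB)⟩, ⟨hBC, fun hC => hAB (hCA hC)⟩⟩
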